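/- arXiv:2602.13281 — 3 statements merged into one kernel-verified Lean document; each statement's English description precedes it below -/
import Mathlib

section
/- Let M be an n×n nonnegative irreducible real matrix (n ≥ 1). Then the spectral radius ρ(M) is a strictly positive real eigenvalue of M, and there exists an entrywise strictly positive vector x ∈ ℝⁿ with M x = ρ(M) x. -/
open Finset Polynomial

namespace PFaux

variable {n : ℕ}

lemma pow_entry_nonneg {M : Matrix (Fin n) (Fin n) ℝ} (hM : ∀ i j, 0 ≤ M i j) :
    ∀ (k : ℕ) (i j), 0 ≤ (M ^ k) i j := by
  intro k
  induction k with
  | zero => intro i j; simp [Matrix.one_apply]; split <;> norm_num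
  | succ k ih =>
    intro i j
    rw [pow_succ, Matrix.mul_apply]
    exact Finset.sum_nonneg fun l _ => mul_nonneg (ih i l) (hM l j)

lemma row_pos {M : Matrix (Fin n) (Fin n) ℝ} (hM : ∀ i j, 0 ≤ M i j)
    (hirr : ∀ i j, ∃ k : ℕ, 0 < k ∧ 0 < (M ^ k) i j) (i : Fin n) :
    ∃ j, 0 < M i j := by
  obtain ⟨k, hk, hpos⟩ := hirr i i
  by_contra h
  push_neg at h
  have hrow : ∀ j, M i j = 0 := fun j => le_antisymm (h j) (hM i j)
  obtain ⟨k', rfl⟩ : ∃ k', k = k' + 1 := ⟨k - 1, (Nat.succ_pred_eq_of_pos hk).symm⟩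
  rw [pow_succ', Matrix.mul_apply] at hpos
  have : ∑ l, M i l * (M ^ k') l i = 0 :=
    Finset.sum_eq_zero fun l _ => by rw [hrow l, zero_mul]
  rw [this] at hpos
  exact lt_irrefl _ hpos

lemma pow_le_one_add_pow {M : Matrix (Fin n) (Fin n) ℝ} (hM : ∀ i j, 0 ≤ M i j) :
    ∀ (m k : ℕ), k ≤ m → ∀ i j, (M ^ k) i j ≤ ((1 + M) ^ m) i j := by
  have h1M : ∀ i j, 0 ≤ (1 + M : Matrix (Fin n) (Fin n) ℝ) i j := by
    intro i j
    simp only [Matrix.add_apply, Matrix.one_apply]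
    split <;> [linarith [hM i j]; simpa using hM i j]
  intro m
  induction m with
  | zero => intro k hk i j; interval_cases k; simp
  | succ m ih =>
    intro k hk i j
    have hexp : ((1 + M) ^ (m + 1)) i j
        = ((1 + M) ^ m) i j + ((1 + M) ^ m * M) i j := by
      rw [pow_succ, mul_add, mul_one, Matrix.add_apply]
    rcases Nat.lt_or_ge k (m + 1) with hkm | hkm
    · have hk' : k ≤ m := Nat.lt_succ_iff.mp hkm
      have h2 : 0 ≤ ((1 + M) ^ m * M) i j := by
        rw [Matrix.mul_apply]
        exact Finset.sum_nonneg fun l _ =>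
          mul_nonneg (pow_entry_nonneg h1M m i l) (hM l j)
      rw [hexp]
      linarith [ih k hk' i j]
    · have hkeq : k = m + 1 := le_antisymm hk hkm
      subst hkeq
      have h2 : (M ^ (m + 1)) i j ≤ ((1 + M) ^ m * M) i j := by
        rw [pow_succ, Matrix.mul_apply, Matrix.mul_apply]
        exact Finset.sum_le_sum fun l _ =>
          mul_le_mul_of_nonneg_right (ih m le_rfl i l) (hM l j)
      have h3 : 0 ≤ ((1 + M) ^ m) i j := pow_entry_nonneg h1M m i j
      rw [hexp]; linarith

lemma exists_posMatrix {M : Matrix (Fin n) (Fin n) ℝ} (hM : ∀ i j, 0 ≤ M i j)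
    (hirr : ∀ i j, ∃ k : ℕ, 0 < k ∧ 0 < (M ^ k) i j) :
    ∃ B : Matrix (Fin n) (Fin n) ℝ, (∀ i j, 0 < B i j) ∧ B * M = M * B := by
  choose κ hκ1 hκ2 using fun p : Fin n × Fin n => hirr p.1 p.2
  set m := Finset.univ.sup κ with hm
  refine ⟨(1 + M) ^ m, fun i j => ?_, ?_⟩
  · have hle : κ (i, j) ≤ m := Finset.le_sup (Finset.mem_univ _)
    exact lt_of_lt_of_le (hκ2 (i, j)) (pow_le_one_add_pow hM m _ hle i j)
  · exact (((Commute.one_left M).add_left (Commute.refl M)).pow_left m).eq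

lemma mulVec_pos {B : Matrix (Fin n) (Fin n) ℝ} (hB : ∀ i j, 0 < B i j)
    {z : Fin n → ℝ} (hz : ∀ i, 0 ≤ z i) (hz0 : z ≠ 0) (i : Fin n) :
    0 < B.mulVec z i := by
  obtain ⟨j0, hj0⟩ : ∃ j, z j ≠ 0 := Function.ne_iff.mp hz0
  have hj0' : 0 < z j0 := lt_of_le_of_ne (hz j0) (Ne.symm hj0)
  simp only [Matrix.mulVec, dotProduct]
  exact Finset.sum_pos' (fun l _ => mul_nonneg (hB i l).le (hz l))
    ⟨j0, Finset.mem_univ _, mul_pos (hB i j0) hj0'⟩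

lemma eval_charpoly {R : Type*} [CommRing R] (A : Matrix (Fin n) (Fin n) R) (t : R) :
    (A.charpoly).eval t = ((Matrix.diagonal fun _ => t) - A).det := by
  rw [Matrix.charpoly]
  have : (Polynomial.evalRingHom t) (Matrix.charmatrix A).det
      = ((Matrix.charmatrix A).map (Polynomial.evalRingHom t)).det :=
    RingHom.map_det _ _
  simp only [coe_evalRingHom] at this
  rw [this]
  congr 1
  ext i j
  by_cases h : i = j
  · subst h; simp [Matrix.charmatrix_apply_eq, Matrix.diagonal_apply_eq]
  · simp [Matrix.charmatrix_apply_ne _ _ _ h, Matrix.diagonal_apply_ne _ h]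

end PFaux



/-- A real square matrix is (entrywise) nonnegative. -/
def Matrix.IsNonneg {n : ℕ} (M : Matrix (Fin n) (Fin n) ℝ) : Prop :=
  ∀ i j, 0 ≤ M i j

/-- A nonnegative matrix is irreducible if for every pair of indices `(i, j)` there is a
positive power of the matrix whose `(i, j)` entry is positive. -/
def Matrix.IsIrred {n : ℕ} (M : Matrix (Fin n) (Fin n) ℝ) : Prop :=
  ∀ i j, ∃ k : ℕ, 0 < k ∧ 0 < (M ^ k) i j

/-- The spectral radius of a real square matrix: the maximum of the absolute values of its
complex eigenvalues (the complex roots of its characteristic polynomial). -/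
noncomputable def Matrix.specRad {n : ℕ} (M : Matrix (Fin n) (Fin n) ℝ) : ℝ :=
  sSup {r : ℝ | ∃ z : ℂ, (Polynomial.aeval z) M.charpoly = 0 ∧ r = ‖z‖}

/-- Perron–Frobenius: the spectral radius of a nonnegative irreducible matrix is a strictly
positive real eigenvalue, with an entrywise strictly positive eigenvector. -/
theorem perron_frobenius_positive_eigenvector {n : ℕ} (hn : 1 ≤ n)
    (M : Matrix (Fin n) (Fin n) ℝ) (hM : M.IsNonneg) (hirr : M.IsIrred) :
    0 < M.specRad ∧
      ∃ x : Fin n → ℝ, (∀ i, 0 < x i) ∧ M.mulVec x = M.specRad • x := by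
  classical
  have hM' : ∀ i j, 0 ≤ M i j := hM
  have hirr' : ∀ i j, ∃ k, 0 < k ∧ 0 < (M ^ k) i j := hirr
  obtain ⟨B, hB, hBM⟩ := PFaux.exists_posMatrix hM' hirr'
  haveI : Nonempty (Fin n) := ⟨⟨0, hn⟩⟩
  have hune : (Finset.univ : Finset (Fin n)).Nonempty := Finset.univ_nonempty
  set K : Set (Fin n → ℝ) := (fun v => B.mulVec v) '' stdSimplex ℝ (Fin n) with hK
  have hKpos : ∀ x ∈ K, ∀ i, 0 < x i := by
    rintro x ⟨s, hs, rfl⟩ i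
    refine PFaux.mulVec_pos hB hs.1 ?_ i
    intro h0
    have h1 := hs.2
    rw [h0] at h1
    simp at h1
  have hKco : IsCompact K :=
    (isCompact_stdSimplex _ _).image (continuous_const.matrix_mulVec continuous_id)
  have hKne : K.Nonempty := by
    refine ⟨B.mulVec (fun _ => (n : ℝ)⁻¹), ⟨fun _ => (n : ℝ)⁻¹,
      ⟨fun i => by positivity, ?_⟩, rfl⟩⟩
    have hn0 : (n : ℝ) ≠ 0 := by positivity
    simp [Finset.sum_const, Finset.card_univ]
    field_simp
  set f : (Fin n → ℝ) → ℝ :=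
    fun x => Finset.univ.inf' hune (fun i => M.mulVec x i / x i) with hf
  have hcont1 : ∀ i : Fin n, Continuous fun x : Fin n → ℝ => M.mulVec x i :=
    fun i => (continuous_apply i).comp (continuous_const.matrix_mulVec continuous_id)
  have hfc : ContinuousOn f K := by
    apply ContinuousOn.finset_inf'_apply hune
    intro i _
    exact ContinuousOn.div (hcont1 i).continuousOn (continuous_apply i).continuousOn
      (fun x hx => (hKpos x hx i).ne')
  have hfscale : ∀ (c : ℝ), 0 < c → ∀ y, f (c • y) = f y := by
    intro c hc y
    refine Finset.inf'_congr hune rfl fun i _ => ?_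
    rw [Matrix.mulVec_smul]
    simp only [Pi.smul_apply, smul_eq_mul]
    rw [mul_div_mul_left _ _ hc.ne']
  obtain ⟨xs, hxsK, hmax⟩ := hKco.exists_isMaxOn hKne hfc
  have hxs : ∀ i, 0 < xs i := hKpos xs hxsK
  set r := f xs with hr
  have hle : ∀ i, r * xs i ≤ M.mulVec xs i := by
    intro i
    have h1 : r ≤ M.mulVec xs i / xs i :=
      Finset.inf'_le (fun i => M.mulVec xs i / xs i) (Finset.mem_univ i)
    exact (le_div_iff₀ (hxs i)).mp h1
  have hMxs : ∀ i, 0 < M.mulVec xs i := by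
    intro i
    obtain ⟨j, hj⟩ := PFaux.row_pos hM' hirr' i
    simp only [Matrix.mulVec, dotProduct]
    exact Finset.sum_pos' (fun l _ => mul_nonneg (hM' i l) (hxs l).le)
      ⟨j, Finset.mem_univ _, mul_pos hj (hxs j)⟩
  have hrpos : 0 < r :=
    (Finset.lt_inf'_iff hune).mpr fun i _ => div_pos (hMxs i) (hxs i)
  have heig : M.mulVec xs = r • xs := by
    by_contra hne
    set z : Fin n → ℝ := M.mulVec xs - r • xs with hz
    have hznn : ∀ i, 0 ≤ z i := by
      intro i
      simp only [hz, Pi.sub_apply, Pi.smul_apply, smul_eq_mul]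
      linarith [hle i]
    have hz0 : z ≠ 0 := sub_ne_zero.mpr hne
    set y := B.mulVec xs with hy
    have hxs0' : xs ≠ 0 := fun h => (hxs ⟨0, hn⟩).ne' (congrFun h _)
    have hypos : ∀ i, 0 < y i := fun i =>
      PFaux.mulVec_pos hB (fun i => (hxs i).le) hxs0' i
    have hkey : B.mulVec z = M.mulVec y - r • y := by
      rw [hz, Matrix.mulVec_sub, Matrix.mulVec_smul, hy,
        Matrix.mulVec_mulVec, Matrix.mulVec_mulVec, hBM]
    have hwpos : ∀ i, 0 < (M.mulVec y - r • y) i := by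
      rw [← hkey]; exact PFaux.mulVec_pos hB hznn hz0
    have hfy : r < f y := by
      refine (Finset.lt_inf'_iff hune).mpr fun i _ => (lt_div_iff₀ (hypos i)).mpr ?_
      have h2 := hwpos i
      simp only [Pi.sub_apply, Pi.smul_apply, smul_eq_mul] at h2
      linarith
    set c := ∑ i, xs i with hc
    have hcpos : 0 < c := Finset.sum_pos (fun i _ => hxs i) hune
    have hmem : c⁻¹ • xs ∈ stdSimplex ℝ (Fin n) := by
      refine ⟨fun i => by simp only [Pi.smul_apply, smul_eq_mul]; exact mul_nonneg (inv_nonneg.mpr hcpos.le) (hxs i).le, ?_⟩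
      simp only [Pi.smul_apply, smul_eq_mul, ← Finset.mul_sum]
      field_simp
      exact hc.symm
    have hyK : c⁻¹ • y ∈ K := ⟨c⁻¹ • xs, hmem, by show B.mulVec (c⁻¹ • xs) = c⁻¹ • y; rw [Matrix.mulVec_smul, hy]⟩
    have hmx : f (c⁻¹ • y) ≤ r := hmax hyK
    rw [hfscale c⁻¹ (by positivity) y] at hmx
    linarith
  have hxs0 : xs ≠ 0 := fun h => (hxs ⟨0, hn⟩).ne' (congrFun h _)
  have hdet : ((Matrix.diagonal fun _ : Fin n => r) - M).det = 0 := by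
    rw [← Matrix.exists_mulVec_eq_zero_iff]
    refine ⟨xs, hxs0, ?_⟩
    rw [Matrix.sub_mulVec, heig]
    ext i
    simp [Matrix.mulVec_diagonal]
  have hroot : (M.charpoly).eval r = 0 := by rw [PFaux.eval_charpoly]; exact hdet
  set E := {s : ℝ | ∃ z : ℂ, (Polynomial.aeval z) M.charpoly = 0 ∧ s = ‖z‖} with hE
  have hrE : r ∈ E := by
    refine ⟨(r : ℂ), ?_, by rw [Complex.norm_of_nonneg hrpos.le]⟩
    have h0 : (r : ℂ) = algebraMap ℝ ℂ r := rfl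
    rw [h0, Polynomial.aeval_def, Polynomial.eval₂_at_apply, hroot, map_zero]
  have hub : ∀ s ∈ E, s ≤ r := by
    rintro s ⟨w, hw, rfl⟩
    have h1 : ((M.map (algebraMap ℝ ℂ)).charpoly).eval w = 0 := by
      rw [Matrix.charpoly_map, Polynomial.eval_map, ← Polynomial.aeval_def]
      exact hw
    rw [PFaux.eval_charpoly] at h1
    have h2 : (Matrix.transpose ((Matrix.diagonal fun _ : Fin n => w) - M.map (algebraMap ℝ ℂ))).det = 0 := by
      rw [Matrix.det_transpose]; exact h1
    obtain ⟨v, hv0, hveq⟩ := Matrix.exists_mulVec_eq_zero_iff.mpr h2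
    have hcomp : ∀ i, w * v i = ∑ j, (M j i : ℂ) * v j := by
      intro i
      have h3 := congrFun hveq i
      rw [Matrix.transpose_sub, Matrix.diagonal_transpose, Matrix.sub_mulVec] at h3
      simp only [Pi.sub_apply, Matrix.mulVec_diagonal, Pi.zero_apply, sub_eq_zero] at h3
      rw [h3]
      simp [Matrix.mulVec, dotProduct, Matrix.transpose_apply, Matrix.map_apply]
    set u : Fin n → ℝ := fun i => ‖v i‖ with hu
    have hineq : ∀ i, ‖w‖ * u i ≤ ∑ j, M j i * u j := by
      intro i
      calc ‖w‖ * u i = ‖w * v i‖ := (norm_mul _ _).symm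
        _ = ‖∑ j, (M j i : ℂ) * v j‖ := by rw [hcomp i]
        _ ≤ ∑ j, ‖(M j i : ℂ) * v j‖ := norm_sum_le _ _
        _ = ∑ j, M j i * u j := Finset.sum_congr rfl fun j _ => by
            rw [norm_mul, Complex.norm_of_nonneg (hM' j i)]
    set S := ∑ i, u i * xs i with hS
    have hSpos : 0 < S := by
      obtain ⟨j0, hj0⟩ := Function.ne_iff.mp hv0
      exact Finset.sum_pos' (fun i _ => mul_nonneg (norm_nonneg _) (hxs i).le)
        ⟨j0, Finset.mem_univ _, mul_pos (norm_pos_iff.mpr hj0) (hxs j0)⟩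
    have hchain : ‖w‖ * S ≤ r * S := by
      calc ‖w‖ * S = ∑ i, (‖w‖ * u i) * xs i := by
            rw [hS, Finset.mul_sum]
            exact Finset.sum_congr rfl fun i _ => by ring
        _ ≤ ∑ i, (∑ j, M j i * u j) * xs i :=
            Finset.sum_le_sum fun i _ => mul_le_mul_of_nonneg_right (hineq i) (hxs i).le
        _ = ∑ j, u j * M.mulVec xs j := by
            simp_rw [Finset.sum_mul, Matrix.mulVec, dotProduct, Finset.mul_sum]
            rw [Finset.sum_comm]
            exact Finset.sum_congr rfl fun j _ => Finset.sum_congr rfl fun i _ => by ring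
        _ = ∑ j, u j * (r * xs j) := by
            rw [heig]
            exact Finset.sum_congr rfl fun j _ => by simp [smul_eq_mul]
        _ = r * S := by
            rw [hS, Finset.mul_sum]
            exact Finset.sum_congr rfl fun j _ => by ring
    exact le_of_mul_le_mul_right hchain hSpos
  have hspec : M.specRad = r := by
    have h0 : M.specRad = sSup E := rfl
    rw [h0]
    exact le_antisymm (csSup_le ⟨r, hrE⟩ hub) (le_csSup ⟨r, fun s hs => hub s hs⟩ hrE)
  rw [hspec]
  exact ⟨hrpos, xs, hxs, heig⟩
end

section
/- Let M be an n×n nonnegative irreducible real matrix. If y ∈ ℝⁿ is entrywise strictly positive and M y = μ y for some real number μ, then μ = ρ(M). Moreover, any two entrywise strictly positive eigenvectors of M are scalar multiples of each other. -/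
/-- Evaluation of the characteristic polynomial is a determinant. -/
lemma my_eval_charpoly {R : Type*} [CommRing R] {n : ℕ} (A : Matrix (Fin n) (Fin n) R)
    (z : R) : (A.charpoly).eval z = (z • (1 : Matrix (Fin n) (Fin n) R) - A).det := by
  rw [Matrix.charpoly, eval_det, Matrix.matPolyEquiv_charmatrix]
  congr 1
  rw [Polynomial.eval_sub, Polynomial.eval_X, Polynomial.eval_C]
  congr 1
  ext i j
  simp [Matrix.scalar, Matrix.one_apply, Matrix.diagonal, Matrix.smul_apply]

/-- Powers of nonnegative matrices are nonnegative. -/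
lemma my_pow_nonneg {n : ℕ} {M : Matrix (Fin n) (Fin n) ℝ} (hM : M.IsNonneg) (k : ℕ) :
    (M ^ k).IsNonneg := by
  induction k with
  | zero =>
    intro i j
    by_cases h : i = j <;> simp [pow_zero, Matrix.one_apply, h]
  | succ k ih =>
    intro i j
    rw [pow_succ, Matrix.mul_apply]
    exact Finset.sum_nonneg fun l _ => mul_nonneg (ih i l) (hM l j)

/-- Powers act on eigenvectors. -/
lemma my_pow_mulVec {n : ℕ} {M : Matrix (Fin n) (Fin n) ℝ} {w : Fin n → ℝ} {μ : ℝ}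
    (h : M.mulVec w = μ • w) (k : ℕ) : (M ^ k).mulVec w = μ ^ k • w := by
  induction k with
  | zero => simp [Matrix.one_mulVec]
  | succ k ih =>
    rw [pow_succ, ← Matrix.mulVec_mulVec, h, Matrix.mulVec_smul, ih, pow_succ,
      smul_smul, mul_comm]

/-- A positive eigenvector forces its eigenvalue to be the spectral radius. -/
lemma my_key {n : ℕ} (hn : 0 < n) (M : Matrix (Fin n) (Fin n) ℝ) (hM : M.IsNonneg)
    (y : Fin n → ℝ) (μ : ℝ) (hy : ∀ i, 0 < y i) (heig : M.mulVec y = μ • y) :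
    μ = M.specRad := by
  set S : Set ℝ := {r : ℝ | ∃ z : ℂ, (Polynomial.aeval z) M.charpoly = 0 ∧ r = ‖z‖}
    with hS
  have i0 : Fin n := ⟨0, hn⟩
  -- μ is nonnegative
  have hμ0 : 0 ≤ μ := by
    have h1 : (M.mulVec y) i0 = μ * y i0 := by rw [heig]; rfl
    have h2 : 0 ≤ (M.mulVec y) i0 := by
      rw [Matrix.mulVec, dotProduct]
      exact Finset.sum_nonneg fun j _ => mul_nonneg (hM i0 j) (hy j).le
    nlinarith [hy i0]
  -- μ ∈ S
  have hμS : μ ∈ S := by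
    refine ⟨(μ : ℂ), ?_, by rw [Complex.norm_real, Real.norm_eq_abs, abs_of_nonneg hμ0]⟩
    have hdet : (μ • (1 : Matrix (Fin n) (Fin n) ℝ) - M).det = 0 := by
      rw [← Matrix.exists_mulVec_eq_zero_iff]
      refine ⟨y, fun h => (hy i0).ne' (congrFun h i0), ?_⟩
      rw [Matrix.sub_mulVec, Matrix.smul_mulVec, Matrix.one_mulVec, heig, sub_self]
    have heval : (M.charpoly).eval μ = 0 := by rw [my_eval_charpoly, hdet]
    rw [show ((μ : ℂ)) = algebraMap ℝ ℂ μ from rfl, Polynomial.aeval_algebraMap_apply]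
    simp [heval]
  -- every element of S is ≤ μ
  have hub : ∀ r ∈ S, r ≤ μ := by
    rintro r ⟨z, hz, rfl⟩
    -- pass to ℂ
    have hdet : (z • (1 : Matrix (Fin n) (Fin n) ℂ) - M.map (algebraMap ℝ ℂ)).det = 0 := by
      have : ((M.map (algebraMap ℝ ℂ)).charpoly).eval z = 0 := by
        rw [Matrix.charpoly_map, Polynomial.eval_map, ← Polynomial.aeval_def]
        exact hz
      rwa [my_eval_charpoly] at this
    obtain ⟨v, hv0, hv⟩ := Matrix.exists_mulVec_eq_zero_iff.mpr hdet
    have hvz : (M.map (algebraMap ℝ ℂ)).mulVec v = z • v := by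
      rw [Matrix.sub_mulVec, Matrix.smul_mulVec, Matrix.one_mulVec, sub_eq_zero] at hv
      exact hv.symm
    set w : Fin n → ℝ := fun i => ‖v i‖ with hw
    have hwnn : ∀ i, 0 ≤ w i := fun i => norm_nonneg _
    obtain ⟨j0, hj0⟩ : ∃ j, v j ≠ 0 := Function.ne_iff.mp hv0
    have hwj0 : 0 < w j0 := by simpa [hw] using hj0
    -- pointwise inequality |z| * w i ≤ (M w) i
    have hkey : ∀ i, ‖z‖ * w i ≤ (M.mulVec w) i := by
      intro i
      have h1 : ‖z‖ * w i = ‖(M.map (algebraMap ℝ ℂ)).mulVec v i‖ := by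
        rw [hvz]
        simp [hw, Pi.smul_apply, smul_eq_mul, map_mul]
      rw [h1, Matrix.mulVec, dotProduct]
      refine le_trans (norm_sum_le _ _) (le_of_eq ?_)
      rw [Matrix.mulVec, dotProduct]
      refine Finset.sum_congr rfl fun l _ => ?_
      simp only [Matrix.map_apply]
      rw [norm_mul]
      congr 1
      · simpa using abs_of_nonneg (hM i l)
    -- take the max of w i / y i
    obtain ⟨i1, -, hi1⟩ := Finset.exists_max_image Finset.univ (fun i => w i / y i)
      ⟨i0, Finset.mem_univ i0⟩
    set t := w i1 / y i1 with ht
    have htpos : 0 < t := lt_of_lt_of_le (div_pos hwj0 (hy j0)) (hi1 j0 (Finset.mem_univ j0))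
    have hwt : ∀ j, w j ≤ t * y j := fun j =>
      (div_le_iff₀ (hy j)).mp (hi1 j (Finset.mem_univ j))
    have hwi1 : w i1 = t * y i1 := by rw [ht, div_mul_cancel₀ _ (hy i1).ne']
    have h2 : (M.mulVec w) i1 ≤ t * (μ * y i1) := by
      have : (M.mulVec w) i1 ≤ t * (M.mulVec y) i1 := by
        rw [Matrix.mulVec, Matrix.mulVec, dotProduct, dotProduct,
          Finset.mul_sum]
        refine Finset.sum_le_sum fun l _ => ?_
        have := mul_le_mul_of_nonneg_left (hwt l) (hM i1 l)
        linarith [this]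
      rw [heig] at this
      simpa [mul_comm, mul_left_comm, mul_assoc] using this
    have h3 := le_trans (hkey i1) h2
    rw [hwi1] at h3
    have hty : 0 < t * y i1 := mul_pos htpos (hy i1)
    have h4 : ‖z‖ * (t * y i1) ≤ μ * (t * y i1) := by
      have hring : t * (μ * y i1) = μ * (t * y i1) := by ring
      linarith
    exact le_of_mul_le_mul_right h4 hty
  have hbdd : BddAbove S := ⟨μ, hub⟩
  rw [Matrix.specRad]
  exact le_antisymm (le_csSup hbdd hμS) (csSup_le ⟨μ, hμS⟩ hub)

/-- For a nonnegative irreducible matrix, a strictly positive eigenvector can only correspond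
to the spectral radius, and any two strictly positive eigenvectors are proportional. -/
theorem positive_eigenvector_unique {n : ℕ} (hn : 0 < n)
    (M : Matrix (Fin n) (Fin n) ℝ) (hM : M.IsNonneg) (hirr : M.IsIrred) :
    (∀ (y : Fin n → ℝ) (μ : ℝ), (∀ i, 0 < y i) → M.mulVec y = μ • y → μ = M.specRad) ∧
      (∀ (y z : Fin n → ℝ) (μ ν : ℝ), (∀ i, 0 < y i) → (∀ i, 0 < z i) →
        M.mulVec y = μ • y → M.mulVec z = ν • z → ∃ c : ℝ, z = c • y) := by
  constructor
  · exact fun y μ hy h => my_key hn M hM y μ hy h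
  · intro y z μ ν hy hz hey hez
    have hμ := my_key hn M hM y μ hy hey
    have hν := my_key hn M hM z ν hz hez
    have hμν : μ = ν := by rw [hμ, hν]
    subst hμν
    -- take c = min z i / y i
    obtain ⟨i0, -, hi0⟩ := Finset.exists_min_image Finset.univ (fun i => z i / y i)
      ⟨⟨0, hn⟩, Finset.mem_univ _⟩
    set c := z i0 / y i0 with hc
    refine ⟨c, ?_⟩
    set w : Fin n → ℝ := fun i => z i - c * y i with hwdef
    have hwnn : ∀ i, 0 ≤ w i := by
      intro i
      have h1 : c * y i ≤ z i := (le_div_iff₀ (hy i)).mp (hi0 i (Finset.mem_univ i))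
      have h2 : w i = z i - c * y i := rfl
      linarith
    have hw0 : w i0 = 0 := by
      show z i0 - c * y i0 = 0
      rw [hc, div_mul_cancel₀ _ (hy i0).ne', sub_self]
    have hMw : M.mulVec w = μ • w := by
      have : w = z - c • y := by funext i; simp [hwdef, Pi.sub_apply]
      rw [this, Matrix.mulVec_sub, Matrix.mulVec_smul, hey, hez, smul_sub, smul_comm c μ y]
    have hwzero : ∀ j, w j = 0 := by
      intro j
      by_contra hj
      have hwj : 0 < w j := lt_of_le_of_ne (hwnn j) (Ne.symm hj)
      obtain ⟨k, -, hk⟩ := hirr i0 j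
      have hpow := my_pow_mulVec hMw k
      have h1 : ((M ^ k).mulVec w) i0 = 0 := by rw [hpow]; simp [hw0]
      have h2 : (M ^ k) i0 j * w j ≤ ((M ^ k).mulVec w) i0 := by
        rw [Matrix.mulVec, dotProduct]
        exact Finset.single_le_sum
          (fun l _ => mul_nonneg (my_pow_nonneg hM k i0 l) (hwnn l)) (Finset.mem_univ j)
      nlinarith [mul_pos hk hwj]
    funext i
    have h : z i - c * y i = 0 := hwzero i
    simp only [Pi.smul_apply, smul_eq_mul]
    linarith
end

section
/- Let M be an n×n nonnegative irreducible real matrix and let f ∈ ℝⁿ be a nonnegative vector. If x ∈ ℝⁿ is nonnegative, x ≠ 0, and (I − M) x = f, then x is entrywise strictly positive and ρ(M) ≤ 1. -/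
open Polynomial in
/-- Complex roots of the characteristic polynomial of a real matrix have eigenvectors. -/
lemma aux_exists_eigenvector {n : ℕ} (M : Matrix (Fin n) (Fin n) ℝ) (z : ℂ)
    (hz : (Polynomial.aeval z) M.charpoly = 0) :
    ∃ v : Fin n → ℂ, v ≠ 0 ∧ (M.map (algebraMap ℝ ℂ)).mulVec v = z • v := by
  set Mc := M.map (algebraMap ℝ ℂ) with hMc
  have h1 : Polynomial.eval z Mc.charpoly = 0 := by
    rw [hMc, Matrix.charpoly_map, eval_map]
    exact hz
  have h2 : (Matrix.scalar (Fin n) z - Mc).det = 0 := by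
    rw [Matrix.charpoly, eval_det, Matrix.matPolyEquiv_charmatrix,
      eval_sub, eval_X, eval_C] at h1
    exact h1
  obtain ⟨v, hv0, hv⟩ := (Matrix.exists_mulVec_eq_zero_iff).2 h2
  refine ⟨v, hv0, ?_⟩
  rw [Matrix.sub_mulVec] at hv
  have hs : (Matrix.scalar (Fin n) z).mulVec v = z • v := by
    ext i
    simp [Matrix.scalar, Matrix.mulVec_diagonal]
  rw [hs] at hv
  exact (sub_eq_zero.mp hv).symm

lemma aux_pow_nonneg {n : ℕ} {M : Matrix (Fin n) (Fin n) ℝ}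
    (hM : ∀ i j, 0 ≤ M i j) (k : ℕ) : ∀ i j, 0 ≤ (M ^ k) i j := by
  induction k with
  | zero => intro i j; rw [pow_zero]; by_cases h : i = j <;> simp [Matrix.one_apply, h]
  | succ k ih =>
    intro i j
    rw [pow_succ, Matrix.mul_apply]
    exact Finset.sum_nonneg fun l _ => mul_nonneg (ih i l) (hM l j)

lemma aux_pow_mulVec_le {n : ℕ}
    (M : Matrix (Fin n) (Fin n) ℝ) (hM : ∀ i j, 0 ≤ M i j)
    (x : Fin n → ℝ) (hMle : ∀ i, M.mulVec x i ≤ x i) :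
    ∀ k i, (M ^ k).mulVec x i ≤ x i := by
  intro k
  induction k with
  | zero => intro i; simp [Matrix.one_mulVec]
  | succ k ih =>
    intro i
    have h1 : (M ^ (k+1)).mulVec x = M.mulVec ((M ^ k).mulVec x) := by
      rw [Matrix.mulVec_mulVec, ← pow_succ']
    rw [h1]
    calc M.mulVec ((M ^ k).mulVec x) i = ∑ j, M i j * ((M ^ k).mulVec x) j := rfl
      _ ≤ ∑ j, M i j * x j :=
        Finset.sum_le_sum fun j _ => mul_le_mul_of_nonneg_left (ih j) (hM i j)
      _ ≤ x i := hMle i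

/-- If `(I - M) x = f` has a nonnegative nontrivial solution `x` (with `M` nonnegative
irreducible and `f` nonnegative), then `x` is entrywise positive and `ρ(M) ≤ 1`. -/
theorem shifted_system_positive_solution {n : ℕ}
    (M : Matrix (Fin n) (Fin n) ℝ) (hM : M.IsNonneg) (hirr : M.IsIrred)
    (f : Fin n → ℝ) (hf : ∀ i, 0 ≤ f i)
    (x : Fin n → ℝ) (hx : ∀ i, 0 ≤ x i) (hx0 : x ≠ 0)
    (hsys : (1 - M).mulVec x = f) :
    (∀ i, 0 < x i) ∧ M.specRad ≤ 1 := by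
  -- Basic consequence of the system: M x ≤ x entrywise.
  have hMle : ∀ i, M.mulVec x i ≤ x i := by
    intro i
    have h := congrFun hsys i
    rw [Matrix.sub_mulVec, Matrix.one_mulVec] at h
    have := hf i
    simp only [Pi.sub_apply] at h
    linarith
  have hpowle := aux_pow_mulVec_le M hM x hMle
  -- there is a strictly positive entry of x
  obtain ⟨j₀, hj₀⟩ : ∃ j, x j ≠ 0 := Function.ne_iff.mp hx0
  have hj₀pos : 0 < x j₀ := lt_of_le_of_ne (hx j₀) (Ne.symm hj₀)
  -- positivity of x
  have hpos : ∀ i, 0 < x i := by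
    intro i
    rcases (hx i).lt_or_eq with h | h
    · exact h
    · exfalso
      obtain ⟨k, -, hk⟩ := hirr i j₀
      have h1 : (M ^ k) i j₀ * x j₀ ≤ (M ^ k).mulVec x i := by
        refine Finset.single_le_sum (f := fun l => (M ^ k) i l * x l) ?_ (Finset.mem_univ j₀)
        exact fun l _ => mul_nonneg (aux_pow_nonneg hM k i l) (hx l)
      have h2 := hpowle k i
      nlinarith [mul_pos hk hj₀pos]
  refine ⟨hpos, ?_⟩
  -- n = 0 is impossible
  rcases Nat.eq_zero_or_pos n with h0 | hn
  · exfalso; subst h0; exact hx0 (funext fun i => i.elim0)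
  -- spectral radius bound
  apply Real.sSup_le _ zero_le_one
  rintro r ⟨z, hz, rfl⟩
  obtain ⟨v, hv0, hv⟩ := aux_exists_eigenvector M z hz
  set w : Fin n → ℝ := fun i => ‖v i‖ with hw
  have hwnn : ∀ i, 0 ≤ w i := fun i => norm_nonneg _
  -- key inequality: |z| * w ≤ M w entrywise
  have hkey : ∀ i, ‖z‖ * w i ≤ M.mulVec w i := by
    intro i
    have h1 : ‖z‖ * w i = ‖(M.map (algebraMap ℝ ℂ)).mulVec v i‖ := by
      rw [hv]
      simp [hw, map_mul]
    rw [h1]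
    calc ‖∑ j, (M.map (algebraMap ℝ ℂ)) i j * v j‖
        ≤ ∑ j, ‖(M.map (algebraMap ℝ ℂ)) i j * v j‖ :=
          norm_sum_le _ _
      _ = ∑ j, M i j * w j := by
          refine Finset.sum_congr rfl fun j _ => ?_
          rw [norm_mul]
          simp [Matrix.map_apply, Complex.norm_real, abs_of_nonneg (hM i j), hw]
      _ = M.mulVec w i := rfl
  -- maximize w i / x i
  obtain ⟨i₀, -, hi₀⟩ := Finset.exists_max_image Finset.univ (fun i => w i / x i)
    ⟨⟨0, hn⟩, Finset.mem_univ _⟩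
  set c : ℝ := w i₀ / x i₀ with hc
  have hcw : ∀ j, w j ≤ c * x j := by
    intro j
    have := hi₀ j (Finset.mem_univ j)
    rwa [div_le_iff₀ (hpos j)] at this
  have hwi : w i₀ = c * x i₀ := by
    rw [hc, div_mul_cancel₀ _ (hpos i₀).ne']
  have hcpos : 0 < c := by
    obtain ⟨j, hj⟩ : ∃ j, v j ≠ 0 := Function.ne_iff.mp hv0
    have hwj : 0 < w j := by
      simp only [hw]
      exact norm_pos_iff.mpr hj
    have := hi₀ j (Finset.mem_univ j)
    exact lt_of_lt_of_le (div_pos hwj (hpos j)) this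
  have ht : 0 < c * x i₀ := mul_pos hcpos (hpos i₀)
  have hchain : ‖z‖ * (c * x i₀) ≤ c * x i₀ := by
    calc ‖z‖ * (c * x i₀) = ‖z‖ * w i₀ := by rw [hwi]
      _ ≤ M.mulVec w i₀ := hkey i₀
      _ = ∑ j, M i₀ j * w j := rfl
      _ ≤ ∑ j, M i₀ j * (c * x j) :=
          Finset.sum_le_sum fun j _ => mul_le_mul_of_nonneg_left (hcw j) (hM i₀ j)
      _ = c * ∑ j, M i₀ j * x j := by
          rw [Finset.mul_sum]
          exact Finset.sum_congr rfl fun j _ => by ring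
      _ = c * M.mulVec x i₀ := rfl
      _ ≤ c * x i₀ := mul_le_mul_of_nonneg_left (hMle i₀) hcpos.le
  exact (mul_le_iff_le_one_left ht).mp hchain
end
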